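/- For all real x in the domain of ζ₂, one has −1 < ζ₂(x) < 0, where ζ₂(x) = −(x·ζ₁(x) + ζ₁(x)²) and ζ₁(x) = φ(x)/Φ(x). -/

import Mathlib

open MeasureTheory Real

noncomputable def phi (x : ℝ) : ℝ := (Real.sqrt (2 * Real.pi))⁻¹ * Real.exp (-x ^ 2 / 2)

noncomputable def Phi (x : ℝ) : ℝ := ∫ t in Set.Iic x, phi t

noncomputable def zeta1 (x : ℝ) : ℝ := phi x / Phi x

noncomputable def zeta2 (x : ℝ) : ℝ := -(x * zeta1 x + (zeta1 x) ^ 2)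

/-! ### Auxiliary lemmas -/

lemma phi_eq (x : ℝ) : phi x = (Real.sqrt (2 * Real.pi))⁻¹ * Real.exp (-(1/2 : ℝ) * x ^ 2) := by
  rw [phi]; congr 1; ring

lemma phi_pos (x : ℝ) : 0 < phi x := by
  have : 0 < Real.sqrt (2 * Real.pi) := Real.sqrt_pos.2 (by positivity)
  exact mul_pos (inv_pos.2 this) (Real.exp_pos _)

lemma continuous_phi : Continuous phi := by
  unfold phi; fun_prop

lemma integrable_phi : Integrable phi := by
  have h : Integrable (fun x : ℝ => Real.exp (-(1/2 : ℝ) * x ^ 2)) :=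
    integrable_exp_neg_mul_sq (by norm_num)
  have := h.const_mul (Real.sqrt (2 * Real.pi))⁻¹
  refine this.congr (Filter.Eventually.of_forall fun x => ?_)
  simp only [phi_eq]

lemma integrable_mul_phi : Integrable (fun x => x * phi x) := by
  have h : Integrable (fun x : ℝ => x * Real.exp (-(1/2 : ℝ) * x ^ 2)) :=
    integrable_mul_exp_neg_mul_sq (by norm_num)
  have := h.const_mul (Real.sqrt (2 * Real.pi))⁻¹
  refine this.congr (Filter.Eventually.of_forall fun x => ?_)
  simp only [phi_eq]; ring

lemma integrable_neg_mul_phi : Integrable (fun t : ℝ => -t * phi t) := by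
  have := integrable_mul_phi.neg'
  refine this.congr (Filter.Eventually.of_forall fun x => ?_)
  ring

lemma hasDerivAt_phi (x : ℝ) : HasDerivAt phi (-x * phi x) x := by
  have h1 : HasDerivAt (fun x : ℝ => -x ^ 2 / 2) (-x) x := by
    have h := ((hasDerivAt_pow 2 x).fun_neg).div_const 2
    convert h using 1
    rfl
    rfl
    ring
  have h2 : HasDerivAt (fun x : ℝ => Real.exp (-x ^ 2 / 2)) (Real.exp (-x ^ 2 / 2) * (-x)) x :=
    (Real.hasDerivAt_exp _).comp x h1
  have h3 := h2.const_mul (Real.sqrt (2 * Real.pi))⁻¹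
  convert h3 using 1
  rfl
  rfl
  rfl
  simp [phi]; ring

lemma Phi_eq (y : ℝ) : Phi y = (∫ t in (0:ℝ)..y, phi t) + Phi 0 := by
  have := intervalIntegral.integral_Iic_sub_Iic (μ := volume) (f := phi)
    integrable_phi.integrableOn integrable_phi.integrableOn (a := 0) (b := y)
  unfold Phi
  linarith [this]

lemma hasDerivAt_Phi (x : ℝ) : HasDerivAt Phi (phi x) x := by
  have h : HasDerivAt (fun u => ∫ t in (0:ℝ)..u, phi t) (phi x) x := by
    apply intervalIntegral.integral_hasDerivAt_right
    · exact integrable_phi.intervalIntegrable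
    · exact continuous_phi.aestronglyMeasurable.stronglyMeasurableAtFilter
    · exact continuous_phi.continuousAt
  have : Phi = fun y => (∫ t in (0:ℝ)..y, phi t) + Phi 0 := funext Phi_eq
  rw [this]
  simpa using h.add_const (Phi 0)

lemma Phi_nonneg (x : ℝ) : 0 ≤ Phi x :=
  setIntegral_nonneg measurableSet_Iic fun t _ => (phi_pos t).le

lemma Phi_pos (x : ℝ) : 0 < Phi x := by
  have h : Phi x = Phi (x - 1) + ∫ t in (x-1)..x, phi t := by
    have := intervalIntegral.integral_Iic_sub_Iic (μ := volume) (f := phi)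
      integrable_phi.integrableOn integrable_phi.integrableOn (a := x - 1) (b := x)
    unfold Phi; linarith [this]
  have hpos : 0 < ∫ t in (x-1)..x, phi t :=
    intervalIntegral.intervalIntegral_pos_of_pos
      integrable_phi.intervalIntegrable (fun t => phi_pos t) (by linarith)
  have := Phi_nonneg (x - 1)
  linarith [h, hpos]

lemma tendsto_pow_phi_aux (n : ℕ) :
    Filter.Tendsto (fun x : ℝ => x ^ n * Real.exp (-x ^ 2 / 2)) Filter.atTop (nhds 0) := by
  have hb : Filter.Tendsto (fun x : ℝ => Real.exp (1/2) * (x ^ n * Real.exp (-x)))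
      Filter.atTop (nhds 0) := by
    have := (tendsto_pow_mul_exp_neg_atTop_nhds_zero n).const_mul (Real.exp (1/2))
    simpa using this
  apply squeeze_zero' (g := fun x => Real.exp (1/2) * (x ^ n * Real.exp (-x)))
  · filter_upwards [Filter.eventually_ge_atTop (0:ℝ)] with x hx
    positivity
  · filter_upwards [Filter.eventually_ge_atTop (0:ℝ)] with x hx
    have h1 : -x ^ 2 / 2 ≤ 1/2 + -x := by nlinarith [sq_nonneg (x - 1)]
    calc x ^ n * Real.exp (-x ^ 2 / 2) ≤ x ^ n * Real.exp (1/2 + -x) := by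
          exact mul_le_mul_of_nonneg_left (Real.exp_le_exp.2 h1) (by positivity)
      _ = Real.exp (1/2) * (x ^ n * Real.exp (-x)) := by rw [Real.exp_add]; ring
  · exact hb

lemma tendsto_abs_pow_phi (n : ℕ) :
    Filter.Tendsto (fun x : ℝ => |x| ^ n * phi x) Filter.atBot (nhds 0) := by
  have h := (tendsto_pow_phi_aux n).comp Filter.tendsto_neg_atBot_atTop
  have h2 : Filter.Tendsto (fun x : ℝ => (-x) ^ n * Real.exp (-x ^ 2 / 2))
      Filter.atBot (nhds 0) := by
    refine h.congr fun x => ?_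
    simp [Function.comp]
  have h3 := h2.const_mul (Real.sqrt (2 * Real.pi))⁻¹
  rw [mul_zero] at h3
  refine h3.congr' ?_
  filter_upwards [Filter.eventually_le_atBot (0:ℝ)] with x hx
  have : |x| = -x := abs_of_nonpos hx
  simp only [phi, this]; ring

lemma tendsto_phi : Filter.Tendsto phi Filter.atBot (nhds 0) := by
  have := tendsto_abs_pow_phi 0
  simpa using this

lemma tendsto_mul_phi : Filter.Tendsto (fun x => x * phi x) Filter.atBot (nhds 0) := by
  have h := (tendsto_abs_pow_phi 1).neg
  rw [neg_zero] at h
  refine h.congr' ?_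
  filter_upwards [Filter.eventually_le_atBot (0:ℝ)] with x hx
  have : |x| = -x := abs_of_nonpos hx
  simp [this]

lemma tendsto_sq_phi : Filter.Tendsto (fun x => x ^ 2 * phi x) Filter.atBot (nhds 0) := by
  refine (tendsto_abs_pow_phi 2).congr fun x => ?_
  rw [sq_abs]

/-- For `x ≤ -1`, `Phi x ≤ phi x`. -/
lemma Phi_le_phi {x : ℝ} (hx : x ≤ -1) : Phi x ≤ phi x := by
  have key : (∫ t in Set.Iic x, -t * phi t) = phi x := by
    have := integral_Iic_of_hasDerivAt_of_tendsto' (f := phi) (f' := fun t => -t * phi t)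
      (a := x) (m := 0) (fun t _ => hasDerivAt_phi t)
      integrable_neg_mul_phi.integrableOn tendsto_phi
    simpa using this
  rw [← key]
  unfold Phi
  apply setIntegral_mono_on integrable_phi.integrableOn
    integrable_neg_mul_phi.integrableOn measurableSet_Iic
  intro t ht
  have ht' : t ≤ -1 := le_trans ht hx
  have h1 : 1 ≤ -t := by linarith
  nlinarith [phi_pos t]

lemma tendsto_Phi : Filter.Tendsto Phi Filter.atBot (nhds 0) := by
  apply squeeze_zero' (g := phi)
  · filter_upwards with x using Phi_nonneg x
  · filter_upwards [Filter.eventually_le_atBot (-1:ℝ)] with x hx using Phi_le_phi hx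
  · exact tendsto_phi

lemma tendsto_mul_Phi : Filter.Tendsto (fun x => x * Phi x) Filter.atBot (nhds 0) := by
  have h : Filter.Tendsto (fun x => -(x * phi x)) Filter.atBot (nhds 0) := by
    simpa using tendsto_mul_phi.neg
  apply squeeze_zero_norm' _ h
  filter_upwards [Filter.eventually_le_atBot (-1:ℝ)] with x hx
  have h1 : Phi x ≤ phi x := Phi_le_phi hx
  have h2 : 0 ≤ Phi x := Phi_nonneg x
  have hx0 : x ≤ 0 := by linarith
  rw [Real.norm_eq_abs, abs_mul, abs_of_nonpos hx0, abs_of_nonneg h2]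
  nlinarith

lemma tendsto_sq_Phi : Filter.Tendsto (fun x => x ^ 2 * Phi x) Filter.atBot (nhds 0) := by
  have h := tendsto_sq_phi
  apply squeeze_zero' (g := fun x => x ^ 2 * phi x)
  · filter_upwards with x
    exact mul_nonneg (sq_nonneg x) (Phi_nonneg x)
  · filter_upwards [Filter.eventually_le_atBot (-1:ℝ)] with x hx
    exact mul_le_mul_of_nonneg_left (Phi_le_phi hx) (sq_nonneg x)
  · exact h

/-- Generic positivity: strictly increasing with limit 0 at `-∞` implies positive. -/
lemma pos_of_hasDerivAt_pos_tendsto {f f' : ℝ → ℝ} (hd : ∀ x, HasDerivAt f (f' x) x)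
    (hp : ∀ x, 0 < f' x) (hlim : Filter.Tendsto f Filter.atBot (nhds 0)) (x : ℝ) : 0 < f x := by
  have hmono : StrictMono f := strictMono_of_hasDerivAt_pos hd hp
  have h1 : (0:ℝ) ≤ f (x - 1) := by
    apply le_of_tendsto hlim
    filter_upwards [Filter.eventually_le_atBot (x - 1)] with y hy
    exact hmono.monotone hy
  have h2 : f (x - 1) < f x := hmono (by linarith)
  linarith

/-- Mills-type inequality: `phi x + x * Phi x > 0`. -/
lemma v_pos (x : ℝ) : 0 < phi x + x * Phi x := by
  apply pos_of_hasDerivAt_pos_tendsto (f := fun t => phi t + t * Phi t) (f' := fun x => Phi x)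
  · intro y
    have h1 := hasDerivAt_phi y
    have h3 : HasDerivAt (fun t => t * Phi t) (Phi y + y * phi y) y := by
      have := (hasDerivAt_id y).fun_mul (hasDerivAt_Phi y)
      convert this using 1
      rfl
      rfl
      rfl
      simp [add_comm]
    have := h1.fun_add h3
    convert this using 1
    rfl
    rfl
    ring
  · exact fun y => Phi_pos y
  · have := tendsto_phi.add tendsto_mul_Phi
    simpa using this
  
/-- Refined Mills inequality: `(1 + x^2) * Phi x + x * phi x > 0`. -/
lemma u_pos (x : ℝ) : 0 < (1 + x ^ 2) * Phi x + x * phi x := by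
  apply pos_of_hasDerivAt_pos_tendsto (f := fun t => (1 + t ^ 2) * Phi t + t * phi t) (f' := fun x => 2 * (phi x + x * Phi x))
  · intro y
    have hP := hasDerivAt_Phi y
    have hp := hasDerivAt_phi y
    have h1 : HasDerivAt (fun t => (1 + t ^ 2) * Phi t)
        (2 * y * Phi y + (1 + y ^ 2) * phi y) y := by
      have ha : HasDerivAt (fun t : ℝ => 1 + t ^ 2) (2 * y) y := by
        simpa using (hasDerivAt_pow 2 y).const_add 1
      simpa using ha.fun_mul hP
    have h2 : HasDerivAt (fun t => t * phi t) (phi y + y * (-y * phi y)) y := by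
      simpa using (hasDerivAt_id y).fun_mul hp
    have := h1.fun_add h2
    convert this using 1
    rfl
    rfl
    ring
  · intro y; linarith [v_pos y]
  · have h1 := tendsto_Phi.add tendsto_sq_Phi
    have h2 := h1.add tendsto_mul_phi
    have : Filter.Tendsto (fun x => (Phi x + x ^ 2 * Phi x) + x * phi x)
        Filter.atBot (nhds 0) := by simpa using h2
    refine this.congr fun y => by ring

/-- Log-concavity inequality: `Phi x ^ 2 - phi x ^ 2 - x * phi x * Phi x > 0`. -/
lemma g_pos (x : ℝ) : 0 < Phi x ^ 2 - phi x ^ 2 - x * phi x * Phi x := by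
  apply pos_of_hasDerivAt_pos_tendsto
    (f := fun t => Phi t ^ 2 - phi t ^ 2 - t * phi t * Phi t)
    (f' := fun x => phi x * ((1 + x ^ 2) * Phi x + x * phi x))
  · intro y
    have hP := hasDerivAt_Phi y
    have hp := hasDerivAt_phi y
    have h1 : HasDerivAt (fun t => Phi t ^ 2) (2 * Phi y * phi y) y := by
      have := (hP.fun_mul hP)
      convert this using 1; rfl; rfl; · ext t; ring
      ring
    have h2 : HasDerivAt (fun t => phi t ^ 2) (2 * phi y * (-y * phi y)) y := by
      have := (hp.fun_mul hp)
      convert this using 1; rfl; rfl; · ext t; ring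
      ring
    have h3 : HasDerivAt (fun t => t * phi t * Phi t)
        ((phi y + y * (-y * phi y)) * Phi y + y * phi y * phi y) y := by
      have ha : HasDerivAt (fun t => t * phi t) (phi y + y * (-y * phi y)) y := by
        simpa using (hasDerivAt_id y).fun_mul hp
      exact ha.mul hP
    have := (h1.fun_sub h2).fun_sub h3
    convert this using 1
    rfl
    rfl
    ring
  · intro y
    exact mul_pos (phi_pos y) (u_pos y)
  · have h1 : Filter.Tendsto (fun x => Phi x ^ 2) Filter.atBot (nhds 0) := by
      have := tendsto_Phi.mul tendsto_Phi
      simpa [sq] using this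
    have h2 : Filter.Tendsto (fun x => phi x ^ 2) Filter.atBot (nhds 0) := by
      have := tendsto_phi.mul tendsto_phi
      simpa [sq] using this
    have h3 : Filter.Tendsto (fun x => x * phi x * Phi x) Filter.atBot (nhds 0) := by
      have := tendsto_mul_phi.mul tendsto_Phi
      simpa using this
    have := (h1.sub h2).sub h3
    simpa using this

theorem zeta2_bounds (x : ℝ) : -1 < zeta2 x ∧ zeta2 x < 0 := by
  have hP := Phi_pos x
  have hp := phi_pos x
  have hv := v_pos x
  have hg := g_pos x
  have hz1 : zeta1 x = phi x / Phi x := rfl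
  constructor
  · unfold zeta2
    rw [hz1]
    have heq : x * (phi x / Phi x) + (phi x / Phi x) ^ 2
        = (x * phi x * Phi x + phi x ^ 2) / Phi x ^ 2 := by
      field_simp
    have key : x * (phi x / Phi x) + (phi x / Phi x) ^ 2 < 1 := by
      rw [heq, div_lt_one (by positivity)]
      nlinarith
    linarith
  · unfold zeta2
    rw [hz1]
    have h : 0 < x * (phi x / Phi x) + (phi x / Phi x) ^ 2 := by
      have heq : x * (phi x / Phi x) + (phi x / Phi x) ^ 2
          = phi x * (x * Phi x + phi x) / Phi x ^ 2 := by
        field_simp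
      rw [heq]
      apply div_pos
      · apply mul_pos hp; linarith
      · positivity
    linarith
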